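/- Conversely, let S be a metric circle that is N-doubling and satisfies: there exists δ > 0 such that every 4-tuple x1,x2,x3,x4 of points in cyclic order on S has cross-ratio [x1,x2,x3,x4] ≥ δ. Then there is k = k(δ) ≥ 1 such that for all distinct x,y ∈ S, one of the two subarcs of S joining x to y has diameter at most k·d(x,y). (One may take k = 3/ε₀ where ε₀ = ε₀(δ) comes from the modified cross-ratio comparison.) -/

import Mathlib

open Metric
open Complex

noncomputable def circE : ℝ → ↥(sphere (0:ℂ) 1) :=
  fun θ => ⟨Complex.exp (θ * Complex.I), by
    simp [mem_sphere_zero_iff_norm]⟩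

lemma circE_cont : Continuous circE := by
  apply Continuous.subtype_mk
  exact Complex.continuous_exp.comp (by continuity)

lemma circE_int_add (θ : ℝ) (n : ℤ) : circE (θ + n * (2 * Real.pi)) = circE θ := by
  apply Subtype.ext
  show Complex.exp _ = Complex.exp _
  rw [show ((θ + n * (2 * Real.pi) : ℝ) : ℂ) * Complex.I
      = (θ:ℂ) * Complex.I + (n:ℤ) * (2 * (Real.pi:ℂ) * Complex.I) by push_cast; ring,
    Complex.exp_add, Complex.exp_int_mul_two_pi_mul_I, mul_one]

lemma circE_inj {θ₁ θ₂ : ℝ} (h : circE θ₁ = circE θ₂) :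
    ∃ n : ℤ, θ₁ = θ₂ + n * (2 * Real.pi) := by
  have h' : Complex.exp (θ₁ * Complex.I) = Complex.exp (θ₂ * Complex.I) :=
    congrArg Subtype.val h
  rw [Complex.exp_eq_exp_iff_exists_int] at h'
  obtain ⟨n, hn⟩ := h'
  refine ⟨n, ?_⟩
  have h2 : ((θ₁ : ℂ)) * Complex.I = ((θ₂ + n * (2 * Real.pi) : ℝ) : ℂ) * Complex.I := by
    push_cast
    rw [hn]; ring
  have := mul_right_cancel₀ Complex.I_ne_zero h2
  exact_mod_cast this

lemma circE_surj (z : ↥(sphere (0:ℂ) 1)) : circE (Complex.arg z.val) = z := by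
  have hz : ‖z.val‖ = 1 := by
    have := z.2; simpa [mem_sphere_zero_iff_norm] using this
  apply Subtype.ext
  have := Complex.norm_mul_exp_arg_mul_I z.val
  rw [hz] at this
  simpa [circE] using this

lemma exists_arcs (a b : ↥(sphere (0:ℂ) 1)) (hab : a ≠ b) :
    ∃ A₁ A₂ : Set ↥(sphere (0:ℂ) 1),
      IsConnected A₁ ∧ IsConnected A₂ ∧ IsCompact A₁ ∧ IsCompact A₂ ∧
      a ∈ A₁ ∧ b ∈ A₁ ∧ a ∈ A₂ ∧ b ∈ A₂ ∧
      A₁ ∪ A₂ = Set.univ ∧ A₁ ∩ A₂ = {a, b} := by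
  have hπ : (0:ℝ) < 2 * Real.pi := by positivity
  set α := Complex.arg a.val with hα
  have ha : circE α = a := circE_surj a
  obtain ⟨β, hβ1, hβ2, hβb⟩ : ∃ β : ℝ, α < β ∧ β < α + 2 * Real.pi ∧ circE β = b := by
    set β₀ := Complex.arg b.val with hβ₀
    have hb : circE β₀ = b := circE_surj b
    have hne : β₀ ≠ α := fun h => hab (by rw [← ha, ← hb, h])
    have hr1 := Complex.arg_mem_Ioc a.val
    have hr2 := Complex.arg_mem_Ioc b.val
    rcases lt_or_gt_of_ne hne with h | h
    · refine ⟨β₀ + 2 * Real.pi, by linarith [hr2.1, hr1.2], by linarith, ?_⟩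
      rw [show β₀ + 2 * Real.pi = β₀ + (1:ℤ) * (2 * Real.pi) by push_cast; ring,
        circE_int_add, hb]
    · exact ⟨β₀, h, by linarith [hr2.2, hr1.1], hb⟩
  have ha' : circE (α + 2 * Real.pi) = a := by
    rw [show α + 2 * Real.pi = α + (1:ℤ) * (2 * Real.pi) by push_cast; ring,
      circE_int_add, ha]
  refine ⟨circE '' Set.Icc α β, circE '' Set.Icc β (α + 2 * Real.pi),
    (isConnected_Icc hβ1.le).image _ circE_cont.continuousOn,
    (isConnected_Icc hβ2.le).image _ circE_cont.continuousOn,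
    (isCompact_Icc).image circE_cont, (isCompact_Icc).image circE_cont,
    ⟨α, ⟨le_refl _, hβ1.le⟩, ha⟩, ⟨β, ⟨hβ1.le, le_refl _⟩, hβb⟩,
    ⟨α + 2 * Real.pi, ⟨hβ2.le, le_refl _⟩, ha'⟩, ⟨β, ⟨le_refl _, hβ2.le⟩, hβb⟩,
    ?_, ?_⟩
  · ext z
    simp only [Set.mem_union, Set.mem_univ, iff_true]
    set γ := Complex.arg z.val with hγ
    have hz : circE γ = z := circE_surj z
    set n : ℤ := ⌈(α - γ) / (2 * Real.pi)⌉ with hn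
    set θ : ℝ := γ + n * (2 * Real.pi) with hθ
    have hθz : circE θ = z := by rw [hθ, circE_int_add, hz]
    have h1 : α ≤ θ := by
      have : (α - γ) / (2 * Real.pi) ≤ (n:ℝ) := Int.le_ceil _
      rw [div_le_iff₀ hπ] at this
      simp only [hθ]; linarith
    have h2 : θ ≤ α + 2 * Real.pi := by
      have h' : ((n:ℝ) - 1) * (2 * Real.pi) < α - γ := by
        rw [← lt_div_iff₀ hπ]
        linarith [Int.ceil_lt_add_one ((α - γ) / (2 * Real.pi))]
      simp only [hθ]; nlinarith
    rcases le_total θ β with h | h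
    · exact Or.inl ⟨θ, ⟨h1, h⟩, hθz⟩
    · exact Or.inr ⟨θ, ⟨h, h2⟩, hθz⟩
  · ext z
    simp only [Set.mem_inter_iff, Set.mem_insert_iff, Set.mem_singleton_iff]
    constructor
    · rintro ⟨⟨θ₁, hθ₁, rfl⟩, ⟨θ₂, hθ₂, hz2⟩⟩
      obtain ⟨n, hn⟩ := circE_inj hz2
      have hn0 : 0 ≤ n := by
        have : (0:ℝ) ≤ (n:ℝ) := by nlinarith [Real.pi_pos, hθ₁.2, hθ₂.1]
        exact_mod_cast this
      have hn1 : n ≤ 1 := by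
        have : (n:ℝ) ≤ 1 := by nlinarith [Real.pi_pos, hθ₁.1, hθ₂.2]
        exact_mod_cast this
      interval_cases n
      · have hθeq : θ₂ = θ₁ := by push_cast at hn; linarith
        have hb' : θ₁ = β := le_antisymm hθ₁.2 (hθeq ▸ hθ₂.1)
        right; rw [hb', hβb]
      · have ha'' : θ₁ = α := by
          push_cast at hn
          have := hθ₂.2
          have := hθ₁.1
          linarith
        left; rw [ha'', ha]
    · rintro (rfl | rfl)
      · exact ⟨⟨α, ⟨le_refl _, hβ1.le⟩, ha⟩, ⟨α + 2*Real.pi, ⟨hβ2.le, le_refl _⟩, ha'⟩⟩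
      · exact ⟨⟨β, ⟨hβ1.le, le_refl _⟩, hβb⟩, ⟨β, ⟨le_refl _, hβ2.le⟩, hβb⟩⟩

lemma exists_far_point {S : Type} [MetricSpace S] {A : Set S} {p : S} (hp : p ∈ A)
    (hpos : 0 < Metric.diam A) : ∃ q ∈ A, Metric.diam A / 3 < dist p q := by
  by_contra hcon
  push_neg at hcon
  have h2 : Metric.diam A ≤ 2 * (Metric.diam A / 3) := by
    apply Metric.diam_le_of_forall_dist_le (by linarith)
    intro u hu v hv
    calc dist u v ≤ dist u p + dist p v := dist_triangle u p v
      _ ≤ Metric.diam A / 3 + Metric.diam A / 3 := by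
          have h1 := hcon u hu
          have h2 := hcon v hv
          rw [dist_comm] at h1
          linarith
      _ = 2 * (Metric.diam A / 3) := by ring
  linarith


set_option maxHeartbeats 1000000 in

/-- Conversely, if a doubling metric circle `S` has all cross-ratios of `4`-tuples in
cyclic order bounded below by `δ > 0`, then there is `k = k(δ) ≥ 1` such that any two
distinct points `x, y ∈ S` are contained in a connected subset (a subarc) of diameter
at most `k·d(x,y)`. -/
theorem metric_circle_arc_condition_of_crossRatio :
    ∀ δ : ℝ, 0 < δ → ∃ k : ℝ, 1 ≤ k ∧
      ∀ (S : Type) [MetricSpace S],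
        Nonempty (S ≃ₜ ↥(sphere (0 : ℂ) 1)) →
        (∃ N : ℕ, ∀ (x : S) (r : ℝ), ∃ F : Finset S, F.card ≤ N ∧
          ball x r ⊆ ⋃ y ∈ F, ball y (r / 2)) →
        (∀ x1 x2 x3 x4 : S,
          x1 ≠ x2 → x1 ≠ x3 → x1 ≠ x4 → x2 ≠ x3 → x2 ≠ x4 → x3 ≠ x4 →
          x2 ∈ ({x1, x3}ᶜ : Set S) → x4 ∈ ({x1, x3}ᶜ : Set S) →
          x4 ∉ connectedComponentIn ({x1, x3}ᶜ : Set S) x2 →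
          δ ≤ dist x1 x3 * dist x2 x4 / (dist x1 x4 * dist x2 x3)) →
        ∀ x y : S, x ≠ y → ∃ C : Set S, IsConnected C ∧ x ∈ C ∧ y ∈ C ∧
          diam C ≤ k * dist x y := by
  intro δ hδ
  set t : ℝ := max 1 (4 / δ) with htdef
  have ht1 : (1:ℝ) ≤ t := le_max_left _ _
  have ht4 : 4 ≤ δ * t := by
    have : 4 / δ ≤ t := le_max_right _ _
    rw [div_le_iff₀ hδ] at this
    linarith [this]
  refine ⟨3 * t + 3, by linarith, ?_⟩
  intro S _ hhomeo _hdoubling hcr x y hxy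
  by_contra hcon
  push_neg at hcon
  obtain ⟨h⟩ := hhomeo
  have hab : h x ≠ h y := fun he => hxy (h.injective he)
  obtain ⟨A₁, A₂, hA₁c, hA₂c, hA₁k, hA₂k, haA₁, hbA₁, haA₂, hbA₂, huniv, hinter⟩ :=
    exists_arcs (h x) (h y) hab
  set B₁ : Set S := h ⁻¹' A₁ with hB₁def
  set B₂ : Set S := h ⁻¹' A₂ with hB₂def
  have hB₁conn : IsConnected B₁ := h.isConnected_preimage.mpr hA₁c
  have hB₂conn : IsConnected B₂ := h.isConnected_preimage.mpr hA₂c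
  have hB₁comp : IsCompact B₁ := h.isCompact_preimage.mpr hA₁k
  have hB₂comp : IsCompact B₂ := h.isCompact_preimage.mpr hA₂k
  have hxB₁ : x ∈ B₁ := haA₁
  have hyB₁ : y ∈ B₁ := hbA₁
  have hxB₂ : x ∈ B₂ := haA₂
  have hyB₂ : y ∈ B₂ := hbA₂
  have hBuniv : B₁ ∪ B₂ = Set.univ := by
    rw [hB₁def, hB₂def, ← Set.preimage_union, huniv, Set.preimage_univ]
  have hBinter : B₁ ∩ B₂ = {x, y} := by
    rw [hB₁def, hB₂def, ← Set.preimage_inter, hinter]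
    ext z
    simp [Set.mem_preimage, h.injective.eq_iff]
  have hd : 0 < dist x y := dist_pos.2 hxy
  -- both arcs have large diameter
  have hD₁ : (3 * t + 3) * dist x y < diam B₁ := hcon B₁ hB₁conn hxB₁ hyB₁
  have hD₂ : (3 * t + 3) * dist x y < diam B₂ := hcon B₂ hB₂conn hxB₂ hyB₂
  have hD₁pos : 0 < diam B₁ := lt_trans (by nlinarith) hD₁
  have hD₂pos : 0 < diam B₂ := lt_trans (by nlinarith) hD₂
  obtain ⟨x2, hx2B₁, hx2far⟩ := exists_far_point hxB₁ hD₁pos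
  obtain ⟨x4, hx4B₂, hx4far⟩ := exists_far_point hyB₂ hD₂pos
  have hx2dist : (t + 1) * dist x y < dist x x2 := by
    have : (3 * t + 3) * dist x y / 3 < diam B₁ / 3 := by linarith
    linarith
  have hx4dist : (t + 1) * dist x y < dist y x4 := by linarith
  have hx2nex : x2 ≠ x := by
    intro he; rw [he] at hx2dist; simp at hx2dist; nlinarith
  have hx2ney : x2 ≠ y := by
    intro he; rw [he] at hx2dist; nlinarith
  have hx4ney : x4 ≠ y := by
    intro he; rw [he] at hx4dist; simp at hx4dist; nlinarith
  have hx4nex : x4 ≠ x := by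
    intro he; rw [he, dist_comm y x] at hx4dist; nlinarith
  -- lower bounds
  have ha' : t * dist x y < dist x2 y := by
    have h1 := dist_triangle x y x2
    have h2 : dist y x2 = dist x2 y := dist_comm y x2
    linarith
  have hb' : t * dist x y < dist x x4 := by
    have h1 := dist_triangle y x x4
    have h2 : dist y x = dist x y := dist_comm y x
    linarith
  have ha'pos : 0 < dist x2 y := lt_trans (by nlinarith) ha'
  have hb'pos : 0 < dist x x4 := lt_trans (by nlinarith) hb'
  -- x2, x4 in complement of {x, y}
  have hx2U : x2 ∈ ({x, y}ᶜ : Set S) := by simp [hx2nex, hx2ney]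
  have hx4U : x4 ∈ ({x, y}ᶜ : Set S) := by simp [hx4nex, hx4ney]
  have hx2nB₂ : x2 ∉ B₂ := by
    intro hc
    have : x2 ∈ B₁ ∩ B₂ := ⟨hx2B₁, hc⟩
    rw [hBinter] at this
    rcases this with h' | h' <;> [exact hx2nex h'; exact hx2ney h']
  have hx4nB₁ : x4 ∉ B₁ := by
    intro hc
    have : x4 ∈ B₁ ∩ B₂ := ⟨hc, hx4B₂⟩
    rw [hBinter] at this
    rcases this with h' | h' <;> [exact hx4nex h'; exact hx4ney h']
  have hx2nex4 : x2 ≠ x4 := fun he => hx2nB₂ (he ▸ hx4B₂)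
  -- separation: x4 not in the connected component of x2
  have hsep : x4 ∉ connectedComponentIn ({x, y}ᶜ : Set S) x2 := by
    intro hx4K
    set K := connectedComponentIn ({x, y}ᶜ : Set S) x2 with hK
    have hKU : K ⊆ ({x, y}ᶜ : Set S) := connectedComponentIn_subset _ _
    have hKconn : IsPreconnected K := isPreconnected_connectedComponentIn
    have hx2K : x2 ∈ K := mem_connectedComponentIn hx2U
    have hu : IsOpen B₂ᶜ := hB₂comp.isClosed.isOpen_compl
    have hv : IsOpen B₁ᶜ := hB₁comp.isClosed.isOpen_compl
    have hsub : K ⊆ B₂ᶜ ∪ B₁ᶜ := by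
      intro z hz
      have hzU := hKU hz
      by_contra hc
      simp only [Set.mem_union, Set.mem_compl_iff, not_or, not_not] at hc
      have : z ∈ B₁ ∩ B₂ := ⟨hc.2, hc.1⟩
      rw [hBinter] at this
      exact hzU this
    obtain ⟨z, hzK, hz2, hz1⟩ := hKconn B₂ᶜ B₁ᶜ hu hv hsub
      ⟨x2, hx2K, hx2nB₂⟩ ⟨x4, hx4K, hx4nB₁⟩
    have : z ∈ B₁ ∪ B₂ := by rw [hBuniv]; trivial
    rcases this with h' | h' <;> [exact hz1 h'; exact hz2 h']
  -- apply the cross-ratio hypothesis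
  have hcross := hcr x x2 y x4 (Ne.symm hx2nex) hxy (Ne.symm hx4nex)
    hx2ney hx2nex4 (Ne.symm hx4ney) hx2U hx4U hsep
  -- derive contradiction
  rw [le_div_iff₀ (by positivity)] at hcross
  have hc' : dist x2 x4 ≤ dist x2 y + dist x y + dist x x4 := by
    have h1 := dist_triangle x2 x x4
    have h2 := dist_triangle x2 y x
    rw [dist_comm y x] at h2
    linarith
  -- key products
  set d := dist x y
  set A := dist x2 y
  set B := dist x x4
  have e1 : 4 * d ≤ δ * (t * d) := by nlinarith
  have e2a : 4 * d * A ≤ δ * (t * d) * A := mul_le_mul_of_nonneg_right e1 ha'pos.le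
  have e2b : δ * (t * d) * A < δ * B * A :=
    mul_lt_mul_of_pos_right (mul_lt_mul_of_pos_left hb' hδ) ha'pos
  have e2 : 4 * (d * A) < δ * (B * A) := by nlinarith [e2a, e2b]
  have e3a : 4 * d * B ≤ δ * (t * d) * B := mul_le_mul_of_nonneg_right e1 hb'pos.le
  have e3b : δ * (t * d) * B < δ * A * B :=
    mul_lt_mul_of_pos_right (mul_lt_mul_of_pos_left ha' hδ) hb'pos
  have e3 : 4 * (d * B) < δ * (B * A) := by nlinarith [e3a, e3b]
  have e4 : d * d ≤ d * A := by nlinarith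
  have e5 : d * dist x2 x4 ≤ d * A + d * d + d * B := by
    nlinarith [mul_le_mul_of_nonneg_left hc' hd.le]
  have hpos : 0 < δ * (B * A) := by positivity
  linarith only [hcross, e2, e3, e4, e5, hpos]
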